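/- arXiv:2505.16804 — 4 statements merged into one kernel-verified Lean document; each statement's English description precedes it below -/
import Mathlib

section
/- There exists a constant C > 0 such that for every complex number z with |Im(z)| ≤ 1, one has |sinc(z)²| ≤ C·e^{2·Im(z)}/(1 + Re(z)²), where sinc(z) = sin(z)/z for z ≠ 0 and sinc(0) = 1. -/
open Complex

noncomputable def sinc (z : ℂ) : ℂ := if z = 0 then 1 else Complex.sin z / z

lemma abs_sin_le' (z : ℂ) :
    ‖Complex.sin z‖ ≤ (Real.exp z.im + Real.exp (-z.im)) / 2 := by
  rw [Complex.sin]
  calc ‖(Complex.exp (-z * I) - Complex.exp (z * I)) * I / 2‖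
      = ‖Complex.exp (-z * I) - Complex.exp (z * I)‖ / 2 := by
        simp [map_div₀, map_mul]
    _ ≤ (‖Complex.exp (-z * I)‖ + ‖Complex.exp (z * I)‖) / 2 := by
        gcongr
        exact norm_sub_le _ _
    _ = (Real.exp z.im + Real.exp (-z.im)) / 2 := by
        rw [Complex.norm_exp, Complex.norm_exp]
        simp [Complex.mul_re]

lemma abs_sin_le_two_abs (z : ℂ) (h : ‖z‖ ≤ 1) :
    ‖Complex.sin z‖ ≤ 2 * ‖z‖ := by
  rw [Complex.sin]
  have h1 : ‖z * I‖ ≤ 1 := by simpa using h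
  have h2 : ‖-z * I‖ ≤ 1 := by simpa using h
  have e1 := Complex.norm_exp_sub_one_le h1
  have e2 := Complex.norm_exp_sub_one_le h2
  calc ‖(Complex.exp (-z * I) - Complex.exp (z * I)) * I / 2‖
      = ‖(Complex.exp (-z * I) - 1) - (Complex.exp (z * I) - 1)‖ / 2 := by
        rw [norm_div, norm_mul]
        simp [sub_sub_sub_cancel_right]
    _ ≤ (‖Complex.exp (-z * I) - 1‖ + ‖Complex.exp (z * I) - 1‖) / 2 := by
        gcongr
        exact norm_sub_le _ _
    _ ≤ (2 * ‖-z * I‖ + 2 * ‖z * I‖) / 2 := by gcongr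
    _ = 2 * ‖z‖ := by simp

theorem sinc_sq_bound :
    ∃ C > 0, ∀ z : ℂ, |z.im| ≤ 1 →
      ‖sinc z ^ 2‖ ≤ C * Real.exp (2 * z.im) / (1 + z.re ^ 2) := by
  refine ⟨2 * Real.exp 5, by positivity, ?_⟩
  intro z hz
  obtain ⟨hy2, hy1⟩ := abs_le.1 hz
  have hx : (0:ℝ) < 1 + z.re ^ 2 := by positivity
  have he : Real.exp (-2) ≤ Real.exp (2 * z.im) := by
    apply Real.exp_le_exp.2; linarith
  have hexp5 : (1:ℝ) ≤ Real.exp 5 := Real.one_le_exp (by norm_num)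
  rcases eq_or_ne z 0 with rfl | hz0
  · have hs0 : sinc 0 = 1 := by simp [sinc]
    rw [hs0]
    simp only [one_pow, norm_one, Complex.zero_im, Complex.zero_re]
    rw [mul_zero, Real.exp_zero, mul_one]
    rw [le_div_iff₀ (by norm_num)]
    nlinarith
  · have habs : ‖sinc z ^ 2‖
        = ‖Complex.sin z‖ ^ 2 / ‖z‖ ^ 2 := by
      simp [sinc, hz0, map_pow, map_div₀, div_pow]
    rw [habs]
    have hzabs : 0 < ‖z‖ := by
      simpa using (norm_pos_iff.2 hz0)
    have hz2 : ‖z‖ ^ 2 = z.re ^ 2 + z.im ^ 2 := by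
      rw [Complex.sq_norm, Complex.normSq_apply]; ring
    by_cases hcase : (1 + z.re ^ 2) / 2 ≤ ‖z‖ ^ 2
    · -- large |z|
      have hsin : ‖Complex.sin z‖ ≤ Real.exp 2 * Real.exp z.im := by
        refine (abs_sin_le' z).trans ?_
        have h1 : Real.exp (-z.im) ≤ Real.exp 2 * Real.exp z.im := by
          rw [← Real.exp_add]
          exact Real.exp_le_exp.2 (by linarith)
        have h2 : Real.exp z.im ≤ Real.exp 2 * Real.exp z.im := by
          nlinarith [Real.exp_pos z.im, Real.one_le_exp (by norm_num : (0:ℝ) ≤ 2)]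
        linarith
      calc ‖Complex.sin z‖ ^ 2 / ‖z‖ ^ 2
          ≤ (Real.exp 2 * Real.exp z.im) ^ 2 / ((1 + z.re ^ 2) / 2) := by
            apply div_le_div₀ (by positivity) _ (by positivity) hcase
            exact pow_le_pow_left₀ (norm_nonneg _) hsin 2
        _ = Real.exp 4 * Real.exp (2 * z.im) * 2 / (1 + z.re ^ 2) := by
            have h1 : Real.exp 2 ^ 2 = Real.exp 4 := by
              rw [sq, ← Real.exp_add]; norm_num
            have h2 : Real.exp z.im ^ 2 = Real.exp (2 * z.im) := by
              rw [sq, ← Real.exp_add]; ring_nf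
            rw [div_div_eq_mul_div, mul_pow, h1, h2]
        _ ≤ 2 * Real.exp 5 * Real.exp (2 * z.im) / (1 + z.re ^ 2) := by
            apply (div_le_div_iff_of_pos_right hx).2
            have h45 : Real.exp 4 ≤ Real.exp 5 := Real.exp_le_exp.2 (by norm_num)
            nlinarith [Real.exp_pos (2 * z.im)]
    · -- small |z|
      push_neg at hcase
      have hx1 : z.re ^ 2 < 1 := by nlinarith [sq_nonneg z.im]
      have hzle : ‖z‖ ≤ 1 := by nlinarith
      have hsin := abs_sin_le_two_abs z hzle
      have h4 : ‖Complex.sin z‖ ^ 2 / ‖z‖ ^ 2 ≤ 4 := by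
        rw [div_le_iff₀ (by positivity)]
        nlinarith [norm_nonneg (Complex.sin z)]
      refine h4.trans ?_
      have hge : Real.exp 3 ≤ 2 * Real.exp 5 * Real.exp (2 * z.im) / (1 + z.re ^ 2) := by
        rw [le_div_iff₀ hx]
        have : Real.exp 5 * Real.exp (-2) = Real.exp 3 := by
          rw [← Real.exp_add]; norm_num
        nlinarith [Real.exp_pos (2 * z.im), Real.exp_pos (3:ℝ), mul_le_mul_of_nonneg_left he (le_of_lt (Real.exp_pos 5))]
      have h34 : (4:ℝ) ≤ Real.exp 3 := by
        have := Real.add_one_le_exp (3:ℝ)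
        linarith
      linarith
end

section
/- Let 0 < p ≤ 2, 0 < β ≤ 1, α = 1 - p/3, and define f(z) = β^α·(1 + β^{2(1-α)/p}·z²)^{p/2} for z ∈ ℂ with |Im(z)| < β^{-(1-α)/p}. Then there is a universal constant C (independent of p and β) such that |f''(z)| ≤ C·β^{α + 2(1-α)/p} for all z with |Im(z)| < (1/2)·β^{-(1-α)/p}. -/
open Complex

set_option maxHeartbeats 1000000 in
theorem f_second_deriv_bound :
    ∃ C > 0, ∀ p β : ℝ, 0 < p → p ≤ 2 → 0 < β → β ≤ 1 →
      ∀ α : ℝ, α = 1 - p / 3 →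
      ∀ f : ℂ → ℂ,
        (f = fun z => ((β : ℂ) ^ (α : ℂ)) *
          (1 + (β : ℂ) ^ ((2 * (1 - α) / p : ℝ) : ℂ) * z ^ 2) ^ ((p : ℂ) / 2)) →
      ∀ z : ℂ, |z.im| < (1 / 2) * β ^ (-(1 - α) / p) →
        ‖iteratedDeriv 2 f z‖ ≤ C * β ^ (α + 2 * (1 - α) / p) := by
  refine ⟨16, by norm_num, ?_⟩
  intro p β hp hp2 hβ hβ1 α hα f hf z₀ hz₀
  have hp0 : p ≠ 0 := ne_of_gt hp
  have he1 : 2 * (1 - α) / p = 2/3 := by rw [hα]; field_simp; ring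
  have he2 : -(1 - α) / p = -(1/3) := by rw [hα]; field_simp; ring
  set c : ℝ := β ^ (2/3 : ℝ) with hc
  have hc0 : 0 < c := Real.rpow_pos_of_pos hβ _
  have hCc : (β : ℂ) ^ ((2 * (1 - α) / p : ℝ) : ℂ) = (c : ℂ) := by
    rw [he1, hc]; exact (Complex.ofReal_cpow hβ.le _).symm
  set s : ℂ := (p : ℂ) / 2 with hs
  set A : ℂ := (β : ℂ) ^ (α : ℂ) with hA
  set w : ℂ → ℂ := fun z => 1 + (c : ℂ) * z ^ 2 with hw
  have hff : f = fun z => A * w z ^ s := by rw [hf]; funext z; rw [hCc]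
  -- strip
  set r : ℝ := β ^ (-(1/3) : ℝ) with hr
  have hr0 : 0 < r := Real.rpow_pos_of_pos hβ _
  set U : Set ℂ := {z : ℂ | |z.im| < r} with hU
  have hUopen : IsOpen U := by
    have : U = Complex.im ⁻¹' (Set.Ioo (-r) r) := by
      ext z; simp [hU, Set.mem_Ioo, abs_lt]
    rw [this]; exact isOpen_Ioo.preimage Complex.continuous_im
  have hcr2 : c * (r * r) = 1 := by
    rw [hc, hr, ← Real.rpow_add hβ, ← Real.rpow_add hβ]
    norm_num
  have hz₀U : z₀ ∈ U := by
    have : |z₀.im| < 1/2 * r := by rwa [he2] at hz₀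
    simp only [hU, Set.mem_setOf_eq]
    nlinarith
  -- real part bounds
  have hre : ∀ z : ℂ, (w z).re = 1 + c * (z.re * z.re - z.im * z.im) := by
    intro z
    simp [hw, Complex.add_re, Complex.mul_re, pow_two, Complex.ofReal_re, Complex.ofReal_im,
      Complex.mul_im]
  have hreU : ∀ z ∈ U, 0 < (w z).re := by
    intro z hz
    simp only [hU, Set.mem_setOf_eq] at hz
    have h1 : z.im * z.im < r * r := by
      nlinarith [abs_nonneg z.im, le_abs_self z.im, neg_abs_le z.im]
    rw [hre z]
    nlinarith [sq_nonneg z.re]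
  have hslit : ∀ z ∈ U, w z ∈ Complex.slitPlane := fun z hz =>
    Complex.mem_slitPlane_iff.mpr (Or.inl (hreU z hz))
  -- first derivative
  have hwd : ∀ z : ℂ, HasDerivAt w ((c:ℂ) * (2*z)) z := by
    intro z
    have h1 : HasDerivAt (fun z : ℂ => z^2) (2*z) z := by simpa using hasDerivAt_pow 2 z
    simpa [hw] using ((h1.const_mul ((c:ℂ))).const_add 1)
  set f₁ : ℂ → ℂ := fun z => A * (s * w z ^ (s-1) * ((c:ℂ)*(2*z))) with hf₁
  have hd1 : ∀ z ∈ U, HasDerivAt f (f₁ z) z := by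
    intro z hz
    have := ((hwd z).cpow_const (c := s) (hslit z hz)).const_mul A
    rw [hff]
    exact this
  -- second derivative
  set F₂ : ℂ := A*s*2*(c:ℂ) * (((s-1) * w z₀ ^ (s-2) * ((c:ℂ)*(2*z₀))) * z₀ + w z₀ ^ (s-1)) with hF₂
  have hd2 : HasDerivAt f₁ F₂ z₀ := by
    have hb : HasDerivAt (fun z => w z ^ (s-1)) ((s-1) * w z₀ ^ (s-2) * ((c:ℂ)*(2*z₀))) z₀ := by
      have := (hwd z₀).cpow_const (hslit z₀ hz₀U) (c := s - 1)
      have h21 : s - 1 - 1 = s - 2 := by ring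
      rwa [h21] at this
    have hmul : HasDerivAt (fun z => (A*s*2*(c:ℂ)) * (w z ^ (s-1) * z)) (A*s*2*(c:ℂ) * (((s-1) * w z₀ ^ (s-2) * ((c:ℂ)*(2*z₀))) * z₀ + w z₀ ^ (s-1) * 1)) z₀ :=
      (hb.mul (hasDerivAt_id z₀)).const_mul (A*s*2*(c:ℂ))
    have hfe : f₁ = fun z => (A*s*2*(c:ℂ)) * (w z ^ (s-1) * z) := by
      funext z; simp only [hf₁]; ring
    rw [hfe]
    convert hmul using 1
    simp only [hF₂, id]
    ring
  have hiter : iteratedDeriv 2 f z₀ = F₂ := by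
    have h2 : iteratedDeriv 2 f z₀ = deriv (deriv f) z₀ := by
      rw [show (2:ℕ) = 1 + 1 from rfl, iteratedDeriv_succ, iteratedDeriv_one]
    have hev : deriv f =ᶠ[nhds z₀] f₁ := by
      filter_upwards [hUopen.mem_nhds hz₀U] with z hz using (hd1 z hz).deriv
    rw [h2, hev.deriv_eq, hd2.deriv]
  -- estimates
  set K : ℝ := ‖w z₀‖ with hK
  have hzim : |z₀.im| < 1/2 * r := by rwa [he2] at hz₀
  have hyy : z₀.im * z₀.im < (1/2*r) * (1/2*r) := by
    have := mul_self_lt_mul_self (abs_nonneg z₀.im) hzim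
    rwa [abs_mul_abs_self] at this
  have hcy : c * (z₀.im * z₀.im) < 1/4 := by nlinarith
  have hwre : 3/4 < (w z₀).re := by
    rw [hre]
    nlinarith [mul_nonneg hc0.le (mul_self_nonneg z₀.re)]
  have hK34 : 3/4 < K := lt_of_lt_of_le hwre (Complex.re_le_norm _)
  have hK0 : 0 < K := by linarith
  have hs1 : s - 1 = ((p/2 - 1 : ℝ) : ℂ) := by rw [hs]; push_cast; ring
  have hs2 : s - 2 = ((p/2 - 2 : ℝ) : ℂ) := by rw [hs]; push_cast; ring
  have habs1 : ‖w z₀ ^ (s-1)‖ = K ^ (p/2 - 1 : ℝ) := by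
    rw [hs1, Complex.norm_cpow_real]
  have habs2 : ‖w z₀ ^ (s-2)‖ = K ^ (p/2 - 2 : ℝ) := by
    rw [hs2, Complex.norm_cpow_real]
  have hb1 : K ^ (p/2 - 1 : ℝ) ≤ 4/3 := by
    calc K ^ (p/2-1:ℝ) ≤ (3/4:ℝ) ^ (p/2-1:ℝ) :=
          Real.rpow_le_rpow_of_nonpos (by norm_num) hK34.le (by linarith)
      _ ≤ (3/4:ℝ) ^ (-1:ℝ) :=
          Real.rpow_le_rpow_of_exponent_ge (by norm_num) (by norm_num) (by linarith)
      _ = 4/3 := by rw [Real.rpow_neg_one]; norm_num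
  have hs1abs : ‖s - 1‖ ≤ 1 := by
    rw [hs1, Complex.norm_real, Real.norm_eq_abs, abs_le]
    constructor <;> [linarith; linarith]
  have hcz : ‖(c:ℂ) * (2*z₀) * z₀‖ ≤ 2*(K+1) := by
    have h1 : (c:ℂ) * (2*z₀) * z₀ = 2 * (w z₀ - 1) := by simp only [hw]; ring
    rw [h1, norm_mul]
    have h2 : ‖w z₀ - 1‖ ≤ K + 1 := by
      have := norm_sub_le (w z₀) 1
      simpa using this
    have h3 : ‖(2 : ℂ)‖ = 2 := by norm_num
    rw [h3]
    linarith
  have hKcomb : K ^ (p/2 - 2 : ℝ) * K = K ^ (p/2 - 1 : ℝ) := by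
    rw [← Real.rpow_add_one hK0.ne' (p/2-2)]
    ring_nf
  have hterm : ‖(s-1) * w z₀ ^ (s-2) * ((c:ℂ)*(2*z₀)) * z₀‖ ≤ (14/3) * K ^ (p/2-1:ℝ) := by
    have heq : (s-1) * w z₀ ^ (s-2) * ((c:ℂ)*(2*z₀)) * z₀
        = (s-1) * (w z₀ ^ (s-2)) * ((c:ℂ)*(2*z₀)*z₀) := by ring
    rw [heq, norm_mul, norm_mul, habs2]
    have hKp2 : (0:ℝ) ≤ K ^ (p/2-2:ℝ) := Real.rpow_nonneg hK0.le _
    calc ‖s-1‖ * K ^ (p/2-2:ℝ) * ‖(c:ℂ)*(2*z₀)*z₀‖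
        ≤ 1 * K ^ (p/2-2:ℝ) * (2*(K+1)) := by
          gcongr
      _ ≤ 1 * K ^ (p/2-2:ℝ) * ((14/3)*K) := by
          have h24 : 2*(K+1) ≤ (14/3)*K := by linarith
          have h25 := mul_le_mul_of_nonneg_left h24 hKp2
          simp only [one_mul]
          exact h25
      _ = (14/3) * (K ^ (p/2-2:ℝ) * K) := by ring
      _ = (14/3) * K ^ (p/2-1:ℝ) := by rw [hKcomb]
  have hS : ‖(s-1) * w z₀ ^ (s-2) * ((c:ℂ)*(2*z₀)) * z₀ + w z₀ ^ (s-1)‖ ≤ 68/9 := by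
    calc ‖(s-1) * w z₀ ^ (s-2) * ((c:ℂ)*(2*z₀)) * z₀ + w z₀ ^ (s-1)‖
        ≤ ‖(s-1) * w z₀ ^ (s-2) * ((c:ℂ)*(2*z₀)) * z₀‖ + ‖w z₀ ^ (s-1)‖ :=
          norm_add_le _ _
      _ ≤ (14/3) * K ^ (p/2-1:ℝ) + K ^ (p/2-1:ℝ) := by rw [habs1]; linarith [hterm]
      _ = (17/3) * K ^ (p/2-1:ℝ) := by ring
      _ ≤ (17/3) * (4/3) := by gcongr
      _ ≤ 68/9 := by norm_num
  have hAabs : ‖A‖ = β ^ α := by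
    rw [hA, Complex.norm_cpow_eq_rpow_re_of_pos hβ]
    simp
  have hsabs : ‖s‖ = p/2 := by
    rw [hs, norm_div, Complex.norm_real, Real.norm_eq_abs, Complex.norm_two, abs_of_pos hp]
  rw [hiter, he1, hF₂]
  have hbpos : 0 < β ^ α := Real.rpow_pos_of_pos hβ α
  calc ‖A*s*2*(c:ℂ) * ((s-1) * w z₀ ^ (s-2) * ((c:ℂ)*(2*z₀)) * z₀ + w z₀ ^ (s-1))‖
      = β^α * (p/2) * 2 * c *
        ‖(s-1) * w z₀ ^ (s-2) * ((c:ℂ)*(2*z₀)) * z₀ + w z₀ ^ (s-1)‖ := by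
        simp only [norm_mul]
        rw [hAabs, hsabs, Complex.norm_real, Real.norm_eq_abs, abs_of_pos hc0]
        norm_num
    _ ≤ β^α * (p/2) * 2 * c * (68/9) := by gcongr
    _ ≤ 16 * β ^ (α + 2/3) := by
        rw [Real.rpow_add hβ, ← hc]
        nlinarith [mul_pos hbpos hc0]
end

section
/- Let 0 < p ≤ 2, 0 < β ≤ 1, α = 1 - p/3, and f(n) = β^α·(1 + β^{2(1-α)/p}·n²)^{p/2} for n ∈ ℤ. Define s_n = β·|n|^p - f(n). Then there is a universal constant C such that |s_n| ≤ C·β^{1/3}/(1 + |n|^{2-p}) for all n ∈ ℤ. -/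
open Real

lemma s_key {p β m : ℝ} (hp : 0 < p) (hp2 : p ≤ 2) (hβ : 0 < β) (hβ1 : β ≤ 1)
    (hm : 0 ≤ m) :
    |β * m ^ p - β ^ (1 - p / 3) * (1 + β ^ ((2 : ℝ) / 3) * m ^ 2) ^ (p / 2)| ≤
      4 * β ^ ((1 : ℝ) / 3) / (1 + m ^ (2 - p)) := by
  obtain ⟨b, hb_def⟩ : ∃ b, b = β ^ ((1 : ℝ) / 3) := ⟨_, rfl⟩
  have hb0 : 0 < b := by rw [hb_def]; exact Real.rpow_pos_of_pos hβ _
  have hb1 : b ≤ 1 := by rw [hb_def]; exact Real.rpow_le_one hβ.le hβ1 (by norm_num)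
  obtain ⟨t, ht_def⟩ : ∃ t, t = b * m := ⟨_, rfl⟩
  have ht0 : 0 ≤ t := ht_def ▸ mul_nonneg hb0.le hm
  rw [show (4:ℝ) * β ^ ((1:ℝ)/3) = 4 * b by rw [hb_def]]
  have hβ23 : β ^ ((2 : ℝ) / 3) = b ^ 2 := by
    rw [hb_def, ← Real.rpow_natCast (β ^ ((1:ℝ)/3)) 2, ← Real.rpow_mul hβ.le]
    norm_num
  have hβ3 : β = b ^ (3 : ℝ) := by
    rw [hb_def, ← Real.rpow_mul hβ.le]; norm_num
  have hβα : β ^ (1 - p / 3) = b ^ (3 : ℝ) * b ^ (-p) := by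
    rw [show (1 - p/3 : ℝ) = (1:ℝ)/3*3 + (1:ℝ)/3*(-p) by ring, Real.rpow_add hβ,
      Real.rpow_mul hβ.le, Real.rpow_mul hβ.le, ← hb_def]
  have hinner : 1 + β ^ ((2 : ℝ) / 3) * m ^ 2 = 1 + t ^ 2 := by
    rw [hβ23, ht_def]; ring
  have htp : t ^ p = b ^ p * m ^ p := by rw [ht_def]; exact Real.mul_rpow hb0.le hm
  have hbpn : b ^ (-p) * b ^ p = 1 := by
    rw [← Real.rpow_add hb0]; simp
  have h2 : t ^ (2:ℝ) = t ^ 2 := by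
    rw [show (2:ℝ) = ((2:ℕ):ℝ) by norm_num, Real.rpow_natCast]
  have hmain : β * m ^ p - β ^ (1 - p / 3) * (1 + β ^ ((2:ℝ)/3) * m ^ 2) ^ (p / 2)
      = -(b ^ (3:ℝ) * b ^ (-p) * ((1 + t ^ 2) ^ (p / 2) - t ^ p)) := by
    rw [hβα, hinner, htp, hβ3]
    linear_combination (-(b ^ (3:ℝ) * m ^ p)) * hbpn
  have ht2p : (t ^ 2 : ℝ) ^ (p / 2) = t ^ p := by
    rw [← h2, ← Real.rpow_mul ht0, show (2:ℝ) * (p/2) = p by ring]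
  have hD0 : t ^ p ≤ (1 + t ^ 2) ^ (p / 2) := by
    rw [← ht2p]
    exact Real.rpow_le_rpow (by positivity) (by linarith [sq_nonneg t]) (by positivity)
  obtain ⟨D, hD_def⟩ : ∃ D, D = (1 + t ^ 2) ^ (p / 2) - t ^ p := ⟨_, rfl⟩
  have hDnn : 0 ≤ D := hD_def ▸ sub_nonneg.2 hD0
  have hCnn : 0 ≤ b ^ (3:ℝ) * b ^ (-p) := by positivity
  have hden0 : (0:ℝ) < 1 + m ^ (2 - p) := by positivity
  rw [hmain, ← hD_def, abs_neg, abs_of_nonneg (mul_nonneg hCnn hDnn), le_div_iff₀ hden0, mul_comm]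
  -- goal : (1 + m^(2-p)) * (b^3 * b^(-p) * D) ≤ 4 * b
  rcases le_or_gt t 1 with ht1 | ht1
  · -- small t
    have hD2 : D ≤ 2 := by
      have h1 : (1 + t ^ 2 : ℝ) ^ (p / 2) ≤ (2:ℝ) ^ (p/2) :=
        Real.rpow_le_rpow (by positivity) (by nlinarith) (by positivity)
      have h2' : (2:ℝ) ^ (p/2) ≤ (2:ℝ) ^ (1:ℝ) :=
        Real.rpow_le_rpow_of_exponent_le (by norm_num) (by linarith)
      have h3 : 0 ≤ t ^ p := Real.rpow_nonneg ht0 p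
      rw [Real.rpow_one] at h2'
      simp only [hD_def]; linarith
    have h4 : b ^ (2 - p) * m ^ (2 - p) ≤ 1 := by
      have h1 : t ^ (2 - p) ≤ 1 := Real.rpow_le_one ht0 ht1 (by linarith)
      rw [ht_def, Real.mul_rpow hb0.le hm] at h1
      exact h1
    have hb2p1 : b ^ (2 - p) ≤ 1 := Real.rpow_le_one hb0.le hb1 (by linarith)
    have e1 : b ^ (3:ℝ) * b ^ (-p) = b * b ^ (2 - p) := by
      rw [← Real.rpow_add hb0, show (3:ℝ) + -p = 1 + (2 - p) by ring, Real.rpow_add hb0,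
        Real.rpow_one]
    have key : (1 + m ^ (2 - p)) * (b ^ (3:ℝ) * b ^ (-p)) ≤ 2 * b := by
      rw [e1]
      have hm0 : 0 ≤ m ^ (2 - p) := Real.rpow_nonneg hm _
      nlinarith [hb0.le]
    calc (1 + m ^ (2-p)) * (b ^ (3:ℝ) * b ^ (-p) * D)
        ≤ (1 + m ^ (2-p)) * (b ^ (3:ℝ) * b ^ (-p) * 2) :=
          mul_le_mul_of_nonneg_left (mul_le_mul_of_nonneg_left hD2 hCnn) hden0.le
      _ = 2 * ((1 + m ^ (2-p)) * (b ^ (3:ℝ) * b ^ (-p))) := by ring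
      _ ≤ 2 * (2 * b) := by linarith
      _ = 4 * b := by ring
  · -- large t
    have htpos : 0 < t := lt_trans one_pos ht1
    have hmpos : 0 < m := by
      rcases hm.lt_or_eq with h | h
      · exact h
      · exfalso; rw [ht_def, ← h, mul_zero] at ht1; linarith
    have htm : t ≤ m := by
      rw [ht_def]; exact mul_le_of_le_one_left hm hb1
    have hm1 : 1 ≤ m := le_trans ht1.le htm
    have hDB : D ≤ t ^ (p - 2) := by
      have hx0 : (0:ℝ) ≤ 1 / t ^ 2 := by positivity
      have hbern : (1 + 1 / t ^ 2) ^ (p / 2) ≤ 1 + (p/2) * (1 / t ^ 2) :=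
        rpow_one_add_le_one_add_mul_self (by linarith) (by positivity) (by linarith)
      have hfac : (1 + t^2 : ℝ) = t ^ 2 * (1 + 1 / t ^ 2) := by
        field_simp; ring
      have hsplit : (1 + t ^ 2 : ℝ) ^ (p/2) = t ^ p * (1 + 1/t^2) ^ (p/2) := by
        rw [hfac, Real.mul_rpow (by positivity) (by positivity), ht2p]
      have htp2 : t ^ p * (1 / t ^ 2) = t ^ (p - 2) := by
        rw [Real.rpow_sub htpos, h2]; ring
      have htppos : 0 < t ^ p := Real.rpow_pos_of_pos htpos p
      have h5 : (1 + t^2:ℝ)^(p/2) ≤ t ^ p + (p/2) * t ^ (p-2) := by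
        rw [hsplit]
        calc t ^ p * (1 + 1/t^2) ^ (p/2) ≤ t ^ p * (1 + (p/2) * (1/t^2)) :=
              mul_le_mul_of_nonneg_left hbern htppos.le
          _ = t ^ p + (p/2) * (t ^ p * (1/t^2)) := by ring
          _ = t ^ p + (p/2) * t ^ (p-2) := by rw [htp2]
      have h6 : 0 < t ^ (p - 2) := Real.rpow_pos_of_pos htpos _
      have h7 : (p/2) * t ^ (p - 2) ≤ t ^ (p - 2) :=
        mul_le_of_le_one_left h6.le (by linarith)
      simp only [hD_def]
      linarith
    have htp2m : t ^ (p - 2) = b ^ (p - 2) * m ^ (p - 2) := by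
      rw [ht_def]; exact Real.mul_rpow hb0.le hm
    have hcoef : b ^ (3:ℝ) * b ^ (-p) * t ^ (p - 2) = b * m ^ (p - 2) := by
      have e : b ^ (3:ℝ) * b ^ (-p) * b ^ (p - 2) = b := by
        rw [← Real.rpow_add hb0, ← Real.rpow_add hb0,
          show (3:ℝ) + -p + (p - 2) = 1 by ring, Real.rpow_one]
      rw [htp2m]
      calc b ^ (3:ℝ) * b ^ (-p) * (b ^ (p-2) * m ^ (p-2))
          = b ^ (3:ℝ) * b ^ (-p) * b ^ (p-2) * m ^ (p-2) := by ring
        _ = b * m ^ (p-2) := by rw [e]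
    have hmp2 : m ^ (p - 2) ≤ 1 := Real.rpow_le_one_of_one_le_of_nonpos hm1 (by linarith)
    have hmm : m ^ (p - 2) * m ^ (2 - p) = 1 := by
      rw [← Real.rpow_add hmpos]; norm_num
    have hmnn : 0 ≤ m ^ (p - 2) := Real.rpow_nonneg hm _
    calc (1 + m ^ (2-p)) * (b ^ (3:ℝ) * b ^ (-p) * D)
        ≤ (1 + m ^ (2-p)) * (b ^ (3:ℝ) * b ^ (-p) * t ^ (p - 2)) :=
          mul_le_mul_of_nonneg_left (mul_le_mul_of_nonneg_left hDB hCnn) hden0.le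
      _ = (1 + m ^ (2-p)) * (b * m ^ (p - 2)) := by rw [hcoef]
      _ = b * (m ^ (p-2) + m ^ (p-2) * m ^ (2-p)) := by ring
      _ = b * (m ^ (p-2) + 1) := by rw [hmm]
      _ ≤ b * 2 := mul_le_mul_of_nonneg_left (by linarith) hb0.le
      _ ≤ 4 * b := by linarith

theorem s_n_bound :
    ∃ C > 0, ∀ p β : ℝ, 0 < p → p ≤ 2 → 0 < β → β ≤ 1 →
      ∀ α : ℝ, α = 1 - p / 3 →
      ∀ n : ℤ,
        |β * |(n : ℝ)| ^ p -
            β ^ α * (1 + β ^ (2 * (1 - α) / p) * (n : ℝ) ^ 2) ^ (p / 2)| ≤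
          C * β ^ ((1 : ℝ) / 3) / (1 + |(n : ℝ)| ^ (2 - p)) := by
  refine ⟨4, by norm_num, ?_⟩
  intro p β hp hp2 hβ hβ1 α hα n
  have hexp : 2 * (1 - α) / p = 2 / 3 := by
    rw [hα]; field_simp; ring
  have hn2 : ((n:ℝ)) ^ 2 = |(n:ℝ)| ^ 2 := (sq_abs _).symm
  rw [hexp, hα, hn2]
  exact s_key hp hp2 hβ hβ1 (abs_nonneg _)
end

section
/- Let Λ ⊆ ℤ² be finite, σ: ℤ² → ℝ supported in Λ, and let ρ: ℤ² → ℤ be a finitely supported neutral charge density (∑_i ρ(i) = 0) whose support is contained in a set D ⊆ ℤ² such that any two points of supp(ρ) are joined by a nearest-neighbor path in D. Then |∑_i ρ(i)·σ(i)| ≤ (1/2)·‖ρ‖₁·|D|^{1/2}·‖(∇σ)↾_D‖₂, where ‖ρ‖₁ = ∑_i |ρ(i)| and ‖(∇σ)↾_D‖₂² = ∑_{i∼j, i,j∈D} (σ(i)-σ(j))². -/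
/-- Nearest-neighbour adjacency on `ℤ²`. -/
def Adj (i j : ℤ × ℤ) : Prop := |i.1 - j.1| + |i.2 - j.2| = 1

instance (i j : ℤ × ℤ) : Decidable (Adj i j) := by unfold Adj; infer_instance

lemma Adj.symm' {i j : ℤ × ℤ} (h : Adj i j) : Adj j i := by
  unfold Adj at *
  rw [abs_sub_comm j.1, abs_sub_comm j.2]; exact h

lemma Adj.ne {i : ℤ × ℤ} (h : Adj i i) : False := by
  unfold Adj at h; simp at h

/-- The nearest-neighbour graph restricted to `D`. -/
def graphD (D : Finset (ℤ × ℤ)) : SimpleGraph (ℤ × ℤ) where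
  Adj u v := Adj u v ∧ u ∈ D ∧ v ∈ D
  symm := ⟨by rintro u v ⟨h, hu, hv⟩; exact ⟨h.symm', hv, hu⟩⟩
  loopless := ⟨by rintro u ⟨h, -⟩; exact h.ne⟩

lemma graphD_support_mem {D : Finset (ℤ × ℤ)} {a j : ℤ × ℤ}
    (q : (graphD D).Walk a j) (ha : a ∈ D) : ∀ v ∈ q.support, v ∈ D := by
  induction q with
  | nil =>
    intro v hv
    rw [SimpleGraph.Walk.support_nil, List.mem_singleton] at hv
    exact hv ▸ ha
  | @cons u w j h q ih =>
    intro v hv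
    rw [SimpleGraph.Walk.support_cons, List.mem_cons] at hv
    rcases hv with rfl | hv
    · exact ha
    · exact ih h.2.2 v hv

lemma graphD_telescope {D : Finset (ℤ × ℤ)} (σ : ℤ × ℤ → ℝ) {a j : ℤ × ℤ}
    (q : (graphD D).Walk a j) :
    σ a - σ j = (q.darts.map (fun d => σ d.toProd.1 - σ d.toProd.2)).sum := by
  induction q with
  | nil => simp
  | @cons u w j h q ih =>
    rw [SimpleGraph.Walk.darts_cons, List.map_cons, List.sum_cons, ← ih]
    simp only [SimpleGraph.Walk.darts]
    ring

/-- The oscillation bound along a path in `D`. -/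
lemma osc_bound (D : Finset (ℤ × ℤ)) (σ : ℤ × ℤ → ℝ) {i j : ℤ × ℤ} (hi : i ∈ D)
    (h : Relation.ReflTransGen (fun u v => Adj u v ∧ u ∈ D ∧ v ∈ D) i j) :
    |σ i - σ j| ≤ Real.sqrt (D.card) *
      Real.sqrt ((1 / 2) * ∑ i ∈ D, ∑ j ∈ D, if Adj i j then (σ i - σ j) ^ 2 else 0) := by
  classical
  set E : ℝ := (1 / 2) * ∑ i ∈ D, ∑ j ∈ D, if Adj i j then (σ i - σ j) ^ 2 else 0 with hE
  have hr : (graphD D).Reachable i j :=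
    (SimpleGraph.reachable_iff_reflTransGen _ _).mpr h
  obtain ⟨w⟩ := hr
  set p := w.bypass with hpdef
  have hp : p.IsPath := w.bypass_isPath
  have hsnd : p.support.Nodup := hp.support_nodup
  have hdnd : p.darts.Nodup := SimpleGraph.Walk.darts_nodup_of_support_nodup hsnd
  have hend : p.edges.Nodup := SimpleGraph.Walk.edges_nodup_of_support_nodup hsnd
  set L : List ((ℤ × ℤ) × (ℤ × ℤ)) := p.darts.map SimpleGraph.Dart.toProd with hL
  have hLnd : L.Nodup := hdnd.map SimpleGraph.Dart.toProd_injective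
  set P : Finset ((ℤ × ℤ) × (ℤ × ℤ)) := L.toFinset with hP
  -- key membership fact
  have hmemP : ∀ x ∈ P, Adj x.1 x.2 ∧ x.1 ∈ D ∧ x.2 ∈ D := by
    intro x hx
    rw [hP, List.mem_toFinset, hL, List.mem_map] at hx
    obtain ⟨d, _, rfl⟩ := hx
    exact d.adj
  -- telescoping sum as a Finset sum
  have htel : σ i - σ j = ∑ x ∈ P, (σ x.1 - σ x.2) := by
    rw [hP, List.sum_toFinset _ hLnd, hL, List.map_map]
    exact graphD_telescope σ p
  -- cardinality bound
  have hcard : (P.card : ℝ) ≤ (D.card : ℝ) := by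
    have h1 : P.card = p.length := by
      rw [hP, List.toFinset_card_of_nodup hLnd, hL, List.length_map,
        SimpleGraph.Walk.length_darts]
    have h2 : p.support.toFinset ⊆ D := by
      intro v hv
      exact graphD_support_mem p hi v (List.mem_toFinset.mp hv)
    have h3 : p.support.toFinset.card = p.length + 1 := by
      rw [List.toFinset_card_of_nodup hsnd, SimpleGraph.Walk.length_support]
    have := Finset.card_le_card h2
    rw [h3] at this
    exact_mod_cast le_trans (by omega : P.card ≤ p.length + 1) this
  -- the set of directed edges of D
  set T : Finset ((ℤ × ℤ) × (ℤ × ℤ)) :=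
    (D ×ˢ D).filter (fun x => Adj x.1 x.2) with hT
  have hTsum : ∑ x ∈ T, (σ x.1 - σ x.2) ^ 2 = 2 * E := by
    rw [hT, Finset.sum_filter, Finset.sum_product, hE]
    ring
  have hPT : P ⊆ T := by
    intro x hx
    obtain ⟨h1, h2, h3⟩ := hmemP x hx
    rw [hT, Finset.mem_filter, Finset.mem_product]
    exact ⟨⟨h2, h3⟩, h1⟩
  set Q : Finset ((ℤ × ℤ) × (ℤ × ℤ)) := P.image Prod.swap with hQ
  have hQT : Q ⊆ T := by
    intro x hx
    rw [hQ, Finset.mem_image] at hx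
    obtain ⟨y, hy, rfl⟩ := hx
    obtain ⟨h1, h2, h3⟩ := hmemP y hy
    rw [hT, Finset.mem_filter, Finset.mem_product]
    exact ⟨⟨h3, h2⟩, h1.symm'⟩
  have hdisj : Disjoint P Q := by
    rw [Finset.disjoint_left]
    intro x hxP hxQ
    rw [hQ, Finset.mem_image] at hxQ
    obtain ⟨y, hyP, hyx⟩ := hxQ
    -- y.swap = x, so y = x.swap; both x and x.swap are in P
    have hadj : Adj x.1 x.2 := (hmemP x hxP).1
    have hxswap : x.swap ∈ P := by
      have : y = x.swap := by rw [← hyx, Prod.swap_swap]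
      exact this ▸ hyP
    rw [hP, List.mem_toFinset, hL, List.mem_map] at hxP hxswap
    obtain ⟨d₁, hd₁, hd₁x⟩ := hxP
    obtain ⟨d₂, hd₂, hd₂x⟩ := hxswap
    have hedge : d₁.edge = d₂.edge := by
      rw [SimpleGraph.Dart.edge, SimpleGraph.Dart.edge, hd₁x, hd₂x]
      exact Sym2.eq_swap
    have hd12 : d₁ = d₂ := List.inj_on_of_nodup_map hend hd₁ hd₂ hedge
    have hxx : x = x.swap := by
      calc x = d₁.toProd := hd₁x.symm
        _ = d₂.toProd := by rw [hd12]
        _ = x.swap := hd₂x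
    have hx12 : x.1 = x.2 := congrArg Prod.fst hxx
    rw [hx12] at hadj
    exact hadj.ne
  have hQsum : ∑ x ∈ Q, (σ x.1 - σ x.2) ^ 2 = ∑ x ∈ P, (σ x.1 - σ x.2) ^ 2 := by
    rw [hQ, Finset.sum_image (by intro a _ b _ hab; exact Prod.swap_injective hab)]
    apply Finset.sum_congr rfl
    intro x _
    simp only [Prod.fst_swap, Prod.snd_swap]
    ring
  have hPE : ∑ x ∈ P, (σ x.1 - σ x.2) ^ 2 ≤ E := by
    have hunion : ∑ x ∈ P ∪ Q, (σ x.1 - σ x.2) ^ 2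
        = 2 * ∑ x ∈ P, (σ x.1 - σ x.2) ^ 2 := by
      rw [Finset.sum_union hdisj, hQsum]; ring
    have hsub : P ∪ Q ⊆ T := Finset.union_subset hPT hQT
    have hle : ∑ x ∈ P ∪ Q, (σ x.1 - σ x.2) ^ 2 ≤ ∑ x ∈ T, (σ x.1 - σ x.2) ^ 2 :=
      Finset.sum_le_sum_of_subset_of_nonneg hsub (fun _ _ _ => sq_nonneg _)
    rw [hunion, hTsum] at hle
    linarith
  have hE0 : 0 ≤ E := by
    have : 0 ≤ ∑ x ∈ P, (σ x.1 - σ x.2) ^ 2 :=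
      Finset.sum_nonneg fun _ _ => sq_nonneg _
    linarith
  -- Cauchy–Schwarz
  have hCS : (σ i - σ j) ^ 2 ≤ (D.card : ℝ) * E := by
    have := Finset.sum_mul_sq_le_sq_mul_sq P (fun _ => (1 : ℝ))
      (fun x => σ x.1 - σ x.2)
    simp only [one_mul, one_pow] at this
    rw [Finset.sum_const, nsmul_eq_mul, mul_one] at this
    rw [htel]
    calc (∑ x ∈ P, (σ x.1 - σ x.2)) ^ 2
        ≤ (P.card : ℝ) * ∑ x ∈ P, (σ x.1 - σ x.2) ^ 2 := this
      _ ≤ (D.card : ℝ) * E := by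
          apply mul_le_mul hcard hPE
            (Finset.sum_nonneg fun _ _ => sq_nonneg _) (Nat.cast_nonneg _)
  calc |σ i - σ j| = Real.sqrt ((σ i - σ j) ^ 2) := (Real.sqrt_sq_eq_abs _).symm
    _ ≤ Real.sqrt ((D.card : ℝ) * E) := Real.sqrt_le_sqrt hCS
    _ = Real.sqrt (D.card) * Real.sqrt E := Real.sqrt_mul (Nat.cast_nonneg _) _

theorem neutral_charge_pairing_bound
    (Λ : Finset (ℤ × ℤ)) (σ : ℤ × ℤ → ℝ)
    (hσ : Function.support σ ⊆ Λ)
    (ρ : ℤ × ℤ → ℤ) (hρfin : (Function.support ρ).Finite) (hρne : ρ ≠ 0)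
    (hneutral : ∑ᶠ i, ρ i = 0)
    (D : Finset (ℤ × ℤ)) (hsupp : Function.support ρ ⊆ D)
    (hconn : ∀ i ∈ Function.support ρ, ∀ j ∈ Function.support ρ,
      Relation.ReflTransGen (fun u v => Adj u v ∧ u ∈ D ∧ v ∈ D) i j) :
    |∑ᶠ i, (ρ i : ℝ) * σ i| ≤
      (1 / 2) * (∑ᶠ i, |(ρ i : ℝ)|) * Real.sqrt (D.card) *
        Real.sqrt ((1 / 2) * ∑ i ∈ D, ∑ j ∈ D, if Adj i j then (σ i - σ j) ^ 2 else 0) := by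
  classical
  set E : ℝ := (1 / 2) * ∑ i ∈ D, ∑ j ∈ D, if Adj i j then (σ i - σ j) ^ 2 else 0 with hE
  set S : Finset (ℤ × ℤ) := hρfin.toFinset with hS
  have hmemS : ∀ x, x ∈ S ↔ ρ x ≠ 0 := by
    intro x; rw [hS, Set.Finite.mem_toFinset, Function.mem_support]
  have hSsub : (S : Set (ℤ × ℤ)) ⊆ Function.support ρ := by
    intro x hx; exact (hmemS x).mp hx
  have hSD : ∀ x ∈ S, x ∈ D := fun x hx => hsupp ((hmemS x).mp hx)
  have hSne : S.Nonempty := by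
    obtain ⟨x, hx⟩ := Function.ne_iff.mp hρne
    exact ⟨x, (hmemS x).mpr hx⟩
  -- min and max of σ on S
  obtain ⟨b, hbS, hbmax⟩ := Finset.exists_max_image S σ hSne
  obtain ⟨a, haS, hamin⟩ := Finset.exists_min_image S σ hSne
  set c : ℝ := (σ b + σ a) / 2 with hc
  have hosc : σ b - σ a ≤ Real.sqrt (D.card) * Real.sqrt E := by
    have := osc_bound D σ (hSD b hbS)
      (hconn b ((hmemS b).mp hbS) a ((hmemS a).mp haS))
    calc σ b - σ a ≤ |σ b - σ a| := le_abs_self _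
      _ ≤ _ := this
  have hkey : ∀ x ∈ S, |σ x - c| ≤ (1 / 2) * (Real.sqrt (D.card) * Real.sqrt E) := by
    intro x hx
    have h1 := hbmax x hx
    have h2 := hamin x hx
    rw [abs_le]
    constructor <;> [skip; skip] <;> rw [hc] <;> linarith
  -- rewrite the finsums as sums over S
  have hfs1 : ∑ᶠ i, (ρ i : ℝ) * σ i = ∑ i ∈ S, (ρ i : ℝ) * σ i := by
    apply finsum_eq_sum_of_support_subset
    intro x hx
    have : ρ x ≠ 0 := by
      intro h0; apply hx; simp [Function.mem_support, h0] at hx ⊢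
    exact (hmemS x).mpr this
  have hfs2 : ∑ᶠ i, |(ρ i : ℝ)| = ∑ i ∈ S, |(ρ i : ℝ)| := by
    apply finsum_eq_sum_of_support_subset
    intro x hx
    have : ρ x ≠ 0 := by
      intro h0; apply hx; simp [Function.mem_support, h0] at hx ⊢
    exact (hmemS x).mpr this
  have hfs3 : ∑ i ∈ S, ρ i = 0 := by
    rw [← hneutral]
    exact (finsum_eq_sum_of_support_subset ρ (fun x hx => (hmemS x).mpr hx)).symm
  have hfs3' : ∑ i ∈ S, (ρ i : ℝ) = 0 := by exact_mod_cast congrArg (Int.cast : ℤ → ℝ) hfs3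
  have hshift : ∑ i ∈ S, (ρ i : ℝ) * σ i = ∑ i ∈ S, (ρ i : ℝ) * (σ i - c) := by
    rw [Finset.sum_congr rfl (fun i _ => by ring :
      ∀ i ∈ S, (ρ i : ℝ) * (σ i - c) = (ρ i : ℝ) * σ i - (ρ i : ℝ) * c)]
    rw [Finset.sum_sub_distrib, ← Finset.sum_mul, hfs3', zero_mul, sub_zero]
  have hbound : |∑ i ∈ S, (ρ i : ℝ) * (σ i - c)|
      ≤ (∑ i ∈ S, |(ρ i : ℝ)|) * ((1 / 2) * (Real.sqrt (D.card) * Real.sqrt E)) := by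
    calc |∑ i ∈ S, (ρ i : ℝ) * (σ i - c)| ≤ ∑ i ∈ S, |(ρ i : ℝ) * (σ i - c)| :=
          Finset.abs_sum_le_sum_abs _ _
      _ = ∑ i ∈ S, |(ρ i : ℝ)| * |σ i - c| := by
          apply Finset.sum_congr rfl; intro i _; exact abs_mul _ _
      _ ≤ ∑ i ∈ S, |(ρ i : ℝ)| * ((1 / 2) * (Real.sqrt (D.card) * Real.sqrt E)) := by
          apply Finset.sum_le_sum
          intro i hi
          exact mul_le_mul_of_nonneg_left (hkey i hi) (abs_nonneg _)
      _ = (∑ i ∈ S, |(ρ i : ℝ)|) * ((1 / 2) * (Real.sqrt (D.card) * Real.sqrt E)) := by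
          rw [← Finset.sum_mul]
  rw [hfs1, hfs2, hshift]
  calc |∑ i ∈ S, (ρ i : ℝ) * (σ i - c)|
      ≤ (∑ i ∈ S, |(ρ i : ℝ)|) * ((1 / 2) * (Real.sqrt (D.card) * Real.sqrt E)) := hbound
    _ = (1 / 2) * (∑ i ∈ S, |(ρ i : ℝ)|) * Real.sqrt (D.card) * Real.sqrt E := by ring
end
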